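/- arXiv:2011.11489 — 2 statements merged into one kernel-verified Lean document; each statement's English description precedes it below -/
import Mathlib

section
/- If X is a Polish space, then the collection F(X) of closed subsets of X, equipped with the Effros σ-algebra generated by the sets {F ∈ F(X) : F ∩ U ≠ ∅} for U ⊆ X open, is a standard Borel space. -/
open EMetric Set MeasureTheory ENNReal Filter

theorem standardBorelSpace_of_measurableEquiv {α β : Type*} [MeasurableSpace α] [MeasurableSpace β]
    [StandardBorelSpace β] (e : α ≃ᵐ β) : StandardBorelSpace α := by
  letI := upgradeStandardBorel β
  letI t : TopologicalSpace α := TopologicalSpace.induced e inferInstance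
  haveI : PolishSpace α := e.toEquiv.polishSpace_induced
  haveI : BorelSpace α := by
    constructor
    rw [borel_comap (f := e), ← eq_borel_upgradeStandardBorel β]
    refine le_antisymm ?_ (measurable_iff_comap_le.1 e.measurable)
    intro s hs
    exact ⟨e.symm ⁻¹' s, e.symm.measurable hs, by ext a; simp⟩
  infer_instance


theorem effros_g_lip {X : Type*} [MetricSpace X] (x : ℕ → X) (r : ℕ → ℝ≥0∞) (y z : X) :
    (⨅ m, edist y (x m) + r m) ≤ (⨅ m, edist z (x m) + r m) + edist y z := by
  rw [ENNReal.iInf_add]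
  refine le_iInf fun m => (iInf_le_iff.2 fun b hb => hb m).trans ?_
  calc edist y (x m) + r m ≤ (edist y z + edist z (x m)) + r m := by
        gcongr; exact edist_triangle _ _ _
    _ = edist z (x m) + r m + edist y z := by ring

theorem effros_closed {X : Type*} [MetricSpace X] (x : ℕ → X) (r : ℕ → ℝ≥0∞) :
    IsClosed {y : X | (⨅ m, edist y (x m) + r m) = 0} := by
  refine isClosed_of_closure_subset fun y hy => ?_
  by_contra h
  have hpos : 0 < ⨅ m, edist y (x m) + r m := pos_iff_ne_zero.2 h
  obtain ⟨z, hz, hd⟩ := EMetric.mem_closure_iff.1 hy _ hpos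
  have hz0 : (⨅ m, edist z (x m) + r m) = 0 := hz
  have := (effros_g_lip x r y z).trans_lt (by rw [hz0, zero_add]; exact hd)
  exact lt_irrefl _ this

theorem effros_key {X : Type*} [MetricSpace X] [CompleteSpace X]
    (x : ℕ → X) (r : ℕ → ℝ≥0∞)
    (h1 : ∀ n m, r n ≤ edist (x n) (x m) + r m)
    (h2 : ∀ n, ∀ q : ℚ, 0 < q → ∃ m, r m < ENNReal.ofReal q ∧
      edist (x n) (x m) < r n + ENNReal.ofReal q) (n : ℕ) :
    infEdist (x n) {y : X | (⨅ m, edist y (x m) + r m) = 0} = r n := by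
  set g : X → ℝ≥0∞ := fun y => ⨅ m, edist y (x m) + r m with hgdef
  set F := {y : X | g y = 0} with hFdef
  have hga : ∀ k, g (x k) = r k := fun k =>
    le_antisymm ((iInf_le _ k).trans (by simp)) (le_iInf fun m => h1 k m)
  have hlow : r n ≤ infEdist (x n) F := by
    rw [EMetric.infEdist, le_infEdist]
    intro y hy
    have h := (hga n ▸ effros_g_lip x r (x n) y : r n ≤ g y + edist (x n) y)
    simpa [show g y = 0 from hy] using h
  have hupper : ∀ q : ℚ, 0 < q → infEdist (x n) F ≤ r n + 5 * ENNReal.ofReal q := by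
    intro q hq
    have hq' : (0:ℝ) < (q:ℝ) := by exact_mod_cast hq
    have hofReal : ∀ k : ℕ, ENNReal.ofReal ((q : ℝ) / 2 ^ k) = ENNReal.ofReal q * 2⁻¹ ^ k := by
      intro k
      rw [div_eq_mul_inv, ENNReal.ofReal_mul hq'.le]
      congr 1
      rw [ENNReal.ofReal_inv_of_pos (by positivity), ← ENNReal.inv_pow,
        ENNReal.ofReal_pow (by norm_num), ENNReal.ofReal_ofNat]
    have hstep : ∀ k j, r j < ENNReal.ofReal ((q:ℝ) / 2 ^ k) →
        ∃ j', r j' < ENNReal.ofReal ((q:ℝ) / 2 ^ (k+1)) ∧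
          edist (x j) (x j') < ENNReal.ofReal ((q:ℝ)/2^k) + ENNReal.ofReal ((q:ℝ)/2^(k+1)) := by
      intro k j hj
      obtain ⟨j', h1', h2'⟩ := h2 j (q / 2 ^ (k+1)) (by positivity)
      have hcast : ((q / 2 ^ (k+1) : ℚ) : ℝ) = (q : ℝ) / 2 ^ (k+1) := by push_cast; ring
      rw [hcast] at h1' h2'
      exact ⟨j', h1', h2'.trans_le (by gcongr)⟩
    obtain ⟨j₀, hj₀, hd₀⟩ := h2 n q hq
    let T : ℕ → Type := fun k => {j : ℕ // r j < ENNReal.ofReal ((q:ℝ) / 2 ^ k)}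
    let base : T 0 := ⟨j₀, by simpa using hj₀⟩
    let u : ∀ k, T k := fun k => Nat.rec base
      (fun k jk => ⟨(hstep k jk.1 jk.2).choose, (hstep k jk.1 jk.2).choose_spec.1⟩) k
    have hu : ∀ k, edist (x (u k).1) (x (u (k+1)).1) <
        ENNReal.ofReal ((q:ℝ)/2^k) + ENNReal.ofReal ((q:ℝ)/2^(k+1)) :=
      fun k => (hstep k (u k).1 (u k).2).choose_spec.2
    set C := 2 * ENNReal.ofReal q with hCdef
    have hgeom : ∀ k, edist (x (u k).1) (x (u (k+1)).1) ≤ C * 2⁻¹ ^ k := by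
      intro k
      refine (hu k).le.trans ?_
      rw [hofReal, hofReal]
      calc ENNReal.ofReal q * 2⁻¹^k + ENNReal.ofReal q * 2⁻¹^(k+1)
          ≤ ENNReal.ofReal q * 2⁻¹^k + ENNReal.ofReal q * 2⁻¹^k :=
            add_le_add_right (mul_le_mul_right (b := (2⁻¹ : ℝ≥0∞) ^ (k+1)) (c := (2⁻¹ : ℝ≥0∞) ^ k)
              (by rw [pow_succ]; exact mul_le_of_le_one_right' (by norm_num)) _) _
        _ = C * 2⁻¹ ^ k := by rw [hCdef]; ring
    have hC : C ≠ ∞ := ENNReal.mul_ne_top (by norm_num) ENNReal.ofReal_ne_top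
    have hcauchy : CauchySeq (fun k => x (u k).1) :=
      cauchySeq_of_edist_le_geometric 2⁻¹ C (by norm_num) hC hgeom
    obtain ⟨y, hy⟩ := cauchySeq_tendsto_of_complete hcauchy
    have hdist : ∀ k, edist (x (u k).1) y ≤ C * 2⁻¹^k / (1 - 2⁻¹) :=
      edist_le_of_edist_le_geometric_of_tendsto 2⁻¹ C hgeom hy
    have hdist' : ∀ k, edist (x (u k).1) y ≤ 4 * ENNReal.ofReal q * 2⁻¹ ^ k := by
      intro k
      refine (hdist k).trans ?_
      rw [ENNReal.one_sub_inv_two, div_eq_mul_inv, inv_inv, hCdef]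
      exact le_of_eq (by ring)
    have hyF : y ∈ F := by
      by_contra h
      have hpos : 0 < g y := pos_iff_ne_zero.2 h
      have hb : ∀ k, g y ≤ 5 * ENNReal.ofReal q * 2⁻¹ ^ k := by
        intro k
        have hl : g y ≤ g (x (u k).1) + edist y (x (u k).1) := effros_g_lip x r y (x (u k).1)
        rw [hga] at hl
        refine hl.trans ?_
        have hr1 : r (u k).1 ≤ ENNReal.ofReal q * 2⁻¹ ^ k := by
          rw [← hofReal]; exact (u k).2.le
        have hr2 : edist y (x (u k).1) ≤ 4 * ENNReal.ofReal q * 2⁻¹^k := by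
          rw [edist_comm]; exact hdist' k
        calc r (u k).1 + edist y (x (u k).1)
            ≤ ENNReal.ofReal q * 2⁻¹^k + 4 * ENNReal.ofReal q * 2⁻¹^k := add_le_add hr1 hr2
          _ = 5 * ENNReal.ofReal q * 2⁻¹ ^ k := by ring
      have htend : Tendsto (fun k : ℕ => 5 * ENNReal.ofReal q * 2⁻¹ ^ k) atTop (nhds 0) := by
        rw [show (0:ℝ≥0∞) = 5 * ENNReal.ofReal q * 0 by simp]
        exact ENNReal.Tendsto.const_mul
          (ENNReal.tendsto_pow_atTop_nhds_zero_of_lt_one (by norm_num)) (Or.inr (ENNReal.mul_ne_top (by norm_num) ENNReal.ofReal_ne_top))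
      have h0 := ge_of_tendsto' htend hb
      exact absurd h0 (by simpa using hpos.ne')
    have hfinal : edist (x n) y ≤ r n + 5 * ENNReal.ofReal q := by
      calc edist (x n) y ≤ edist (x n) (x (u 0).1) + edist (x (u 0).1) y := edist_triangle _ _ _
        _ ≤ (r n + ENNReal.ofReal q) + 4 * ENNReal.ofReal q * 2⁻¹ ^ 0 :=
            add_le_add (show edist (x n) (x (u 0).1) ≤ r n + ENNReal.ofReal q from hd₀.le)
              (hdist' 0)
        _ = r n + 5 * ENNReal.ofReal q := by ring
    exact (infEdist_le_edist_of_mem hyF).trans hfinal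
  have hrfin : r n ≠ ∞ := by
    obtain ⟨m, hm1, -⟩ := h2 n 1 one_pos
    exact ((h1 n m).trans_lt (ENNReal.add_lt_top.2 ⟨edist_lt_top _ _, hm1.trans_le le_top⟩)).ne
  refine le_antisymm ?_ hlow
  refine ENNReal.le_of_forall_pos_le_add fun ε hε hfin => ?_
  have hε' : (0:ℝ) < (ε:ℝ)/5 := by positivity
  obtain ⟨q, hq0, hq5⟩ := exists_rat_btwn hε'
  have hq0' : (0:ℚ) < q := by exact_mod_cast hq0
  refine (hupper q hq0').trans ?_
  gcongr
  calc 5 * ENNReal.ofReal q = ENNReal.ofReal (5 * q) := by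
        rw [ENNReal.ofReal_mul (by norm_num : (0:ℝ) ≤ 5), ENNReal.ofReal_ofNat]
    _ ≤ ENNReal.ofReal (ε:ℝ) := ENNReal.ofReal_le_ofReal (by
        have : (q:ℝ) < (ε:ℝ)/5 := hq5
        linarith)
    _ = (ε : ℝ≥0∞) := ENNReal.ofReal_coe_nnreal


/-- The Effros σ-algebra on the collection of closed subsets of `X`, generated by
the sets `{F : F ∩ U ≠ ∅}` for `U ⊆ X` open. -/
def EffrosSigmaAlgebra (X : Type*) [TopologicalSpace X] :
    MeasurableSpace {F : Set X // IsClosed F} :=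
  MeasurableSpace.generateFrom
    {S | ∃ U : Set X, IsOpen U ∧
      S = {F : {F : Set X // IsClosed F} | (F.1 ∩ U).Nonempty}}

theorem effros_aux {X : Type*} [MetricSpace X] [CompleteSpace X]
    [SecondCountableTopology X] [Nonempty X] :
    @StandardBorelSpace {F : Set X // IsClosed F} (EffrosSigmaAlgebra X) := by
  letI m0 : MeasurableSpace {F : Set X // IsClosed F} := EffrosSigmaAlgebra X
  set x : ℕ → X := TopologicalSpace.denseSeq X with hxdef
  have hx : DenseRange x := TopologicalSpace.denseRange_denseSeq X
  set Φ : {F : Set X // IsClosed F} → (ℕ → ℝ≥0∞) := fun F n => infEdist (x n) F.1 with hPhi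
  -- measurability of Φ
  have hΦmeas : Measurable Φ := by
    rw [measurable_pi_iff]
    intro n
    apply measurable_of_Iio
    intro a
    apply MeasurableSpace.measurableSet_generateFrom
    refine ⟨Metric.eball (x n) a, EMetric.isOpen_ball, ?_⟩
    ext F
    simp only [Set.mem_preimage, Set.mem_Iio, Set.mem_setOf_eq]
    rw [show Φ F n = infEdist (x n) F.1 from rfl, EMetric.infEdist, infEdist_lt_iff]
    constructor
    · rintro ⟨y, hyF, hyd⟩
      exact ⟨y, hyF, by rwa [EMetric.mem_ball, edist_comm]⟩
    · rintro ⟨y, hyF, hyb⟩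
      exact ⟨y, hyF, by rwa [EMetric.mem_ball, edist_comm] at hyb⟩
  -- generators are countable unions of coordinate sublevel sets
  have hgen : ∀ U : Set X, IsOpen U →
      {F : {F : Set X // IsClosed F} | (F.1 ∩ U).Nonempty}
        = ⋃ (n : ℕ) (q : ℚ) (_ : Metric.ball (x n) q ⊆ U),
            {F : {F : Set X // IsClosed F} | Φ F n < ENNReal.ofReal q} := by
    intro U hU
    ext F
    simp only [Set.mem_setOf_eq, Set.mem_iUnion]
    constructor
    · rintro ⟨y, hyF, hyU⟩
      obtain ⟨δ, hδ, hball⟩ := Metric.isOpen_iff.1 hU y hyU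
      obtain ⟨n, hn⟩ := hx.exists_dist_lt y (half_pos hδ)
      obtain ⟨q, hq1, hq2⟩ := exists_rat_btwn hn
      refine ⟨n, q, ?_, ?_⟩
      · intro z hz
        apply hball
        rw [Metric.mem_ball] at hz ⊢
        have : dist y (x n) < δ / 2 := hn
        calc dist z y ≤ dist z (x n) + dist (x n) y := dist_triangle _ _ _
          _ < q + δ/2 := by rw [dist_comm (x n) y]; exact add_lt_add hz this
          _ ≤ δ/2 + δ/2 := by have : (q:ℝ) < δ/2 := hq2; linarith
          _ = δ := by ring
      · calc infEdist (x n) F.1 ≤ edist (x n) y := infEdist_le_edist_of_mem hyF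
          _ < ENNReal.ofReal q := edist_lt_ofReal.2 (by rw [dist_comm]; exact hq1)
    · rintro ⟨n, q, hsub, hFq⟩
      rw [show Φ F n = infEdist (x n) F.1 from rfl, EMetric.infEdist, infEdist_lt_iff] at hFq
      obtain ⟨y, hyF, hyd⟩ := hFq
      refine ⟨y, hyF, hsub ?_⟩
      rw [Metric.mem_ball, dist_comm]
      exact edist_lt_ofReal.1 hyd
  -- the Effros σ-algebra is the comap of the Borel σ-algebra under Φ
  have hcomap : m0 = MeasurableSpace.comap Φ inferInstance := by
    refine le_antisymm ?_ (measurable_iff_comap_le.1 hΦmeas)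
    refine MeasurableSpace.generateFrom_le ?_
    rintro S ⟨U, hU, rfl⟩
    rw [hgen U hU]
    refine MeasurableSet.iUnion fun n => MeasurableSet.iUnion fun q =>
      MeasurableSet.iUnion fun _ => ?_
    exact ⟨{r : ℕ → ℝ≥0∞ | r n < ENNReal.ofReal q},
      measurableSet_lt (measurable_pi_apply n) measurable_const, rfl⟩
  -- injectivity
  have hΦinj : Function.Injective Φ := by
    intro F G h
    have hfun : (fun y : X => infEdist y F.1) = fun y => infEdist y G.1 := by
      refine Continuous.ext_on hx continuous_infEdist continuous_infEdist ?_
      rintro _ ⟨n, rfl⟩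
      exact congrFun h n
    apply Subtype.ext
    ext y
    rw [mem_iff_infEdist_zero_of_closed F.2, mem_iff_infEdist_zero_of_closed G.2]
    exact Iff.of_eq (congrArg (· = (0:ℝ≥0∞)) (congrFun hfun y))
  -- the range of Φ
  set A : Set (ℕ → ℝ≥0∞) := {r | ∀ n, r n = ∞} with hAdef
  set B : Set (ℕ → ℝ≥0∞) := {r | (∀ n m, r n ≤ edist (x n) (x m) + r m) ∧
      ∀ n, ∀ q : ℚ, 0 < q → ∃ m, r m < ENNReal.ofReal q ∧
        edist (x n) (x m) < r n + ENNReal.ofReal q} with hBdef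
  have hrange : Set.range Φ = A ∪ B := by
    apply Set.Subset.antisymm
    · rintro _ ⟨F, rfl⟩
      rcases Set.eq_empty_or_nonempty F.1 with hF | ⟨z, hz⟩
      · left
        intro n
        rw [show Φ F n = infEdist (x n) F.1 from rfl, hF, EMetric.infEdist, infEdist_empty]
      · right
        constructor
        · intro n m
          exact infEdist_le_edist_add_infEdist
        · intro n q hq
          have hq' : (0:ℝ) < (q:ℝ)/2 := by
            have : (0:ℝ) < q := by exact_mod_cast hq
            linarith
          have hfin : Φ F n ≠ ∞ :=
            ((infEdist_le_edist_of_mem hz).trans_lt (edist_lt_top _ _)).ne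
          have hlt : Φ F n < Φ F n + ENNReal.ofReal ((q:ℝ)/2) :=
            ENNReal.lt_add_right hfin (ENNReal.ofReal_pos.2 hq').ne'
          obtain ⟨y, hyF, hyd⟩ := infEdist_lt_iff.1 hlt
          obtain ⟨m, hm⟩ := hx.exists_dist_lt y hq'
          refine ⟨m, ?_, ?_⟩
          · calc infEdist (x m) F.1 ≤ edist (x m) y := infEdist_le_edist_of_mem hyF
              _ < ENNReal.ofReal q := edist_lt_ofReal.2 (by
                  rw [dist_comm]
                  have : (q:ℝ)/2 < q := by
                    have : (0:ℝ) < q := by exact_mod_cast hq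
                    linarith
                  exact hm.trans this)
          · calc edist (x n) (x m) ≤ edist (x n) y + edist y (x m) := edist_triangle _ _ _
              _ < (Φ F n + ENNReal.ofReal ((q:ℝ)/2)) + ENNReal.ofReal ((q:ℝ)/2) :=
                  ENNReal.add_lt_add hyd (edist_lt_ofReal.2 hm)
              _ = Φ F n + ENNReal.ofReal q := by
                  rw [add_assoc, ← ENNReal.ofReal_add (by positivity) (by positivity)]
                  norm_num
    · rintro r (hr | ⟨hb1, hb2⟩)
      · refine ⟨⟨∅, isClosed_empty⟩, funext fun n => ?_⟩
        rw [show Φ ⟨∅, isClosed_empty⟩ n = infEdist (x n) ∅ from rfl, EMetric.infEdist, infEdist_empty, hr n]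
      · refine ⟨⟨{y : X | (⨅ m, edist y (x m) + r m) = 0}, effros_closed x r⟩,
          funext fun n => ?_⟩
        exact effros_key x r hb1 hb2 n
  -- measurability of the range
  have hA : MeasurableSet A := by
    rw [hAdef, Set.setOf_forall]
    exact MeasurableSet.iInter fun n => measurable_pi_apply n (measurableSet_singleton ⊤)
  have hB : MeasurableSet B := by
    have hBeq : B = (⋂ n, ⋂ m, {r : ℕ → ℝ≥0∞ | r n ≤ edist (x n) (x m) + r m}) ∩
        ⋂ n, ⋂ (q : ℚ), ⋂ (_ : 0 < q), ⋃ m,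
          ({r : ℕ → ℝ≥0∞ | r m < ENNReal.ofReal q} ∩
            {r : ℕ → ℝ≥0∞ | edist (x n) (x m) < r n + ENNReal.ofReal q}) := by
      ext r
      simp only [hBdef, Set.mem_setOf_eq, Set.mem_inter_iff, Set.mem_iInter, Set.mem_iUnion,
        Set.mem_inter_iff, Set.mem_setOf_eq]
    rw [hBeq]
    refine MeasurableSet.inter ?_ ?_
    · exact MeasurableSet.iInter fun n => MeasurableSet.iInter fun m =>
        measurableSet_le (measurable_pi_apply n) (measurable_const.add (measurable_pi_apply m))
    · refine MeasurableSet.iInter fun n => MeasurableSet.iInter fun q =>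
        MeasurableSet.iInter fun _ => MeasurableSet.iUnion fun m => ?_
      exact (measurableSet_lt (measurable_pi_apply m) measurable_const).inter
        (measurableSet_lt measurable_const ((measurable_pi_apply n).add measurable_const))
  -- assemble the measurable equivalence
  have hmem : ∀ F, Φ F ∈ A ∪ B := fun F => hrange ▸ Set.mem_range_self F
  have hsur : ∀ p : (A ∪ B : Set (ℕ → ℝ≥0∞)), ∃ F, Φ F = (p : ℕ → ℝ≥0∞) := by
    intro p
    have : (p : ℕ → ℝ≥0∞) ∈ Set.range Φ := by rw [hrange]; exact p.2
    exact this
  let e : {F : Set X // IsClosed F} ≃ (A ∪ B : Set (ℕ → ℝ≥0∞)) :=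
    { toFun := fun F => ⟨Φ F, hmem F⟩
      invFun := fun p => (hsur p).choose
      left_inv := fun F => hΦinj ((hsur ⟨Φ F, hmem F⟩).choose_spec)
      right_inv := fun p => Subtype.ext ((hsur p).choose_spec) }
  have he : Measurable e := hΦmeas.subtype_mk
  have hesymm : Measurable e.symm := by
    intro s hs
    rw [hcomap] at hs
    obtain ⟨t, ht, rfl⟩ := hs
    have : e.symm ⁻¹' (Φ ⁻¹' t) = Subtype.val ⁻¹' t := by
      ext p
      simp only [Set.mem_preimage]
      rw [show Φ (e.symm p) = (p : ℕ → ℝ≥0∞) from (hsur p).choose_spec]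
    rw [this]
    exact measurable_subtype_coe ht
  haveI : StandardBorelSpace (A ∪ B : Set (ℕ → ℝ≥0∞)) := (hA.union hB).standardBorel
  exact standardBorelSpace_of_measurableEquiv (MeasurableEquiv.mk e he hesymm)

/-- If `X` is Polish, then `F(X)` with the Effros σ-algebra is a standard Borel space. -/
theorem effros_standardBorel (X : Type*) [TopologicalSpace X] [PolishSpace X] :
    @StandardBorelSpace {F : Set X // IsClosed F} (EffrosSigmaAlgebra X) := by
  cases isEmpty_or_nonempty X with
  | inl h =>
    letI := EffrosSigmaAlgebra X
    haveI : Subsingleton {F : Set X // IsClosed F} :=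
      ⟨fun F G => Subtype.ext (by ext y; exact isEmptyElim y)⟩
    haveI : DiscreteMeasurableSpace {F : Set X // IsClosed F} := by
      constructor
      intro s
      rcases s.eq_empty_or_nonempty with rfl | ⟨a, ha⟩
      · exact MeasurableSet.empty
      · have : s = Set.univ := Set.eq_univ_of_forall fun b => by
          rwa [Subsingleton.elim b a]
        rw [this]
        exact MeasurableSet.univ
    infer_instance
  | inr h =>
    letI := TopologicalSpace.upgradeIsCompletelyMetrizable X
    exact effros_aux
end

section
/- Let X be an uncountable Polish space. Then the Borel σ-algebra of X is strictly contained in the class Π¹₁(X) of coanalytic subsets of X. -/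
open MeasureTheory Set

namespace BorelSsubsetAux

/-- Cantor space. -/
local notation "𝒞" => (ℕ → Bool)
/-- Baire space. -/
local notation "𝒩" => (ℕ → ℕ)

/-- Union of two analytic sets is analytic. -/
theorem analyticSet_union {α : Type*} [TopologicalSpace α] {s t : Set α}
    (hs : AnalyticSet s) (ht : AnalyticSet t) : AnalyticSet (s ∪ t) := by
  rw [Set.union_eq_iUnion]
  exact AnalyticSet.iUnion (fun b => by cases b <;> simpa)

/-- An enumerated countable basis of `𝒞 × 𝒩` (possibly with empty sets). -/
theorem exists_enum_basis : ∃ B : ℕ → Set (𝒞 × 𝒩),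
    (∀ n, IsOpen (B n)) ∧
    (∀ (U : Set (𝒞 × 𝒩)), IsOpen U → ∀ p ∈ U, ∃ n, p ∈ B n ∧ B n ⊆ U) := by
  obtain ⟨b, b_count, -, hb⟩ := TopologicalSpace.exists_countable_basis (𝒞 × 𝒩)
  have hne : (insert (∅ : Set (𝒞 × 𝒩)) b).Nonempty := ⟨∅, Set.mem_insert _ _⟩
  obtain ⟨B, hB⟩ := ((b_count.insert ∅)).exists_eq_range hne
  refine ⟨B, ?_, ?_⟩
  · intro n
    have : B n ∈ insert (∅ : Set (𝒞 × 𝒩)) b := by rw [hB]; exact ⟨n, rfl⟩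
    rcases this with h | h
    · simp [h]
    · exact hb.isOpen h
  · intro U hU p hp
    obtain ⟨t, htb, hpt, htU⟩ := hb.exists_subset_of_mem_open hp hU
    have : t ∈ insert (∅ : Set (𝒞 × 𝒩)) b := Set.mem_insert_of_mem _ htb
    rw [hB] at this
    obtain ⟨n, hn⟩ := this
    exact ⟨n, by rw [hn]; exact hpt, by rw [hn]; exact htU⟩

noncomputable def B : ℕ → Set (𝒞 × 𝒩) := exists_enum_basis.choose

theorem B_open : ∀ n, IsOpen (B n) := exists_enum_basis.choose_spec.1

theorem B_basis : ∀ (U : Set (𝒞 × 𝒩)), IsOpen U → ∀ p ∈ U, ∃ n, p ∈ B n ∧ B n ⊆ U :=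
  exists_enum_basis.choose_spec.2

/-- The closed set coded by `c : 𝒞`. -/
def K (c : 𝒞) : Set (𝒞 × 𝒩) := {p | ∀ n, c n = true → p ∉ B n}

open scoped Classical in
theorem K_eq_of_closed {F : Set (𝒞 × 𝒩)} (hF : IsClosed F) :
    K (fun n => decide (B n ⊆ Fᶜ)) = F := by
  ext p
  simp only [K, Set.mem_setOf_eq, decide_eq_true_eq]
  constructor
  · intro h
    by_contra hpF
    obtain ⟨n, hpn, hnsub⟩ := B_basis Fᶜ hF.isOpen_compl p hpF
    exact h n hnsub hpn
  · intro hpF n hsub hpn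
    exact hsub hpn hpF

/-- The diagonal set. -/
def D : Set 𝒞 := {x | ∃ y, (x, y) ∈ K x}

theorem analyticSet_D : AnalyticSet D := by
  have hE : IsClosed {p : 𝒞 × 𝒩 | ∀ n, p.1 n = true → p ∉ B n} := by
    have : {p : 𝒞 × 𝒩 | ∀ n, p.1 n = true → p ∉ B n}
        = ⋂ n, ({p : 𝒞 × 𝒩 | p.1 n = true}ᶜ ∪ (B n)ᶜ) := by
      ext p
      simp only [Set.mem_setOf_eq, Set.mem_iInter, Set.mem_union, Set.mem_compl_iff]
      constructor
      · intro h n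
        by_cases hb : p.1 n = true
        · exact Or.inr (h n hb)
        · exact Or.inl hb
      · intro h n hb hp
        rcases h n with h' | h'
        · exact h' hb
        · exact h' hp
    rw [this]
    refine isClosed_iInter fun n => IsClosed.union ?_ (B_open n).isClosed_compl
    have : IsOpen {p : 𝒞 × 𝒩 | p.1 n = true} := by
      have : Continuous fun p : 𝒞 × 𝒩 => p.1 n := (continuous_apply n).comp continuous_fst
      exact (isOpen_discrete {true}).preimage this
    exact this.isClosed_compl
  have : D = Prod.fst '' {p : 𝒞 × 𝒩 | ∀ n, p.1 n = true → p ∉ B n} := by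
    ext x
    simp only [D, K, Set.mem_setOf_eq, Set.mem_image, Prod.exists]
    constructor
    · rintro ⟨y, hy⟩; exact ⟨x, y, hy, rfl⟩
    · rintro ⟨a, y, hy, rfl⟩; exact ⟨y, hy⟩
  rw [this]
  have : PolishSpace Bool := inferInstance
  exact hE.analyticSet.image_of_continuous continuous_fst

/-- Universality: every analytic subset of `𝒞` is a slice. -/
theorem exists_code {A : Set 𝒞} (hA : AnalyticSet A) :
    ∃ c : 𝒞, A = {x | ∃ y, (x, y) ∈ K c} := by
  rw [AnalyticSet] at hA
  rcases hA with rfl | ⟨f, f_cont, rfl⟩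
  · refine ⟨fun _ => true, ?_⟩
    ext x
    simp only [Set.mem_empty_iff_false, Set.mem_setOf_eq, false_iff, not_exists]
    intro y hy
    obtain ⟨n, hpn, -⟩ := B_basis Set.univ isOpen_univ (x, y) (Set.mem_univ _)
    exact hy n rfl hpn
  · have hF : IsClosed {p : 𝒞 × 𝒩 | f p.2 = p.1} :=
      isClosed_eq (f_cont.comp continuous_snd) continuous_fst
    classical
    refine ⟨fun n => decide (B n ⊆ {p : 𝒞 × 𝒩 | f p.2 = p.1}ᶜ), ?_⟩
    rw [K_eq_of_closed hF]
    rfl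

theorem not_analyticSet_compl_D : ¬ AnalyticSet Dᶜ := by
  intro h
  obtain ⟨c, hc⟩ := exists_code h
  have : c ∈ Dᶜ ↔ c ∈ D := by
    rw [hc]; rfl
  simp only [Set.mem_compl_iff] at this
  tauto

end BorelSsubsetAux

/-- In an uncountable Polish space, the Borel sets form a strict subclass of the
coanalytic (Π¹₁) sets. -/
theorem borel_ssubset_coanalytic (X : Type*) [TopologicalSpace X] [PolishSpace X]
    [MeasurableSpace X] [BorelSpace X] (hX : ¬ Countable X) :
    {A : Set X | MeasurableSet A} ⊂ {A : Set X | AnalyticSet Aᶜ} := by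
  open BorelSsubsetAux in
  constructor
  · intro A hA
    exact hA.compl.analyticSet
  · intro hsub
    have huncount : ¬ (Set.univ : Set X).Countable := by
      rwa [Set.countable_univ_iff]
    obtain ⟨f, -, f_cont, f_inj⟩ :=
      isClosed_univ.exists_nat_bool_injection_of_not_countable huncount
    have hemb := f_cont.isClosedEmbedding f_inj
    set A : Set X := f '' BorelSsubsetAux.Dᶜ with hA
    have hAcompl : Aᶜ = f '' BorelSsubsetAux.D ∪ (Set.range f)ᶜ := by
      ext x
      simp only [hA, Set.mem_compl_iff, Set.mem_union, Set.mem_image]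
      constructor
      · intro h
        by_cases hx : x ∈ Set.range f
        · obtain ⟨a, rfl⟩ := hx
          left
          refine ⟨a, ?_, rfl⟩
          by_contra ha
          exact h ⟨a, by simpa using ha, rfl⟩
        · right; exact hx
      · rintro (⟨a, ha, rfl⟩ | hx)
        · rintro ⟨b, hb, hba⟩
          have : b = a := f_inj hba
          rw [this] at hb
          exact hb ha
        · rintro ⟨b, -, hba⟩
          exact hx ⟨b, hba⟩
    have hAcoanalytic : AnalyticSet Aᶜ := by
      rw [hAcompl]
      refine BorelSsubsetAux.analyticSet_union
        (BorelSsubsetAux.analyticSet_D.image_of_continuous f_cont) ?_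
      exact hemb.isClosed_range.isOpen_compl.measurableSet.analyticSet
    have hAmeas : MeasurableSet A := hsub hAcoanalytic
    have : MeasurableSet (BorelSsubsetAux.Dᶜ : Set (ℕ → Bool)) := by
      have := f_cont.measurable hAmeas
      rwa [hA, Set.preimage_image_eq _ f_inj] at this
    have hPB : PolishSpace Bool := inferInstance
    exact BorelSsubsetAux.not_analyticSet_compl_D this.analyticSet
end
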